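/- Let Θ be a topologically reasonable family of subsets of 2^ω. If every set in Θ has the Baire property, then every set in Θ is Silver measurable. -/

import Mathlib

/-- `T` is a tree of finite binary sequences: closed under initial segments. -/
def IsTree (T : Set (List Bool)) : Prop :=
  ∀ t ∈ T, ∀ k : ℕ, t.take k ∈ T

/-- `t` is a splitting node of `T`: it lies in `T` and both its one-bit extensions do. -/
def SplitNode (T : Set (List Bool)) (t : List Bool) : Prop :=
  t ∈ T ∧ t ++ [false] ∈ T ∧ t ++ [true] ∈ T

/-- `T` is a perfect tree: a nonempty tree in which every node extends to a splitting node. -/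
def IsPerfect (T : Set (List Bool)) : Prop :=
  IsTree T ∧ T.Nonempty ∧ ∀ t ∈ T, ∃ s, t <+: s ∧ SplitNode T s

/-- `T` is a Silver (uniform perfect) tree: perfect, and nodes of equal length
have the same one-bit extensions in `T`. -/
def IsSilver (T : Set (List Bool)) : Prop :=
  IsPerfect T ∧ ∀ s ∈ T, ∀ t ∈ T, s.length = t.length →
    ∀ i : Bool, (s ++ [i] ∈ T ↔ t ++ [i] ∈ T)

/-- The body `[T]` of a tree: all infinite branches whose finite initial
segments all lie in `T`. -/
def body (T : Set (List Bool)) : Set (ℕ → Bool) :=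
  { x | ∀ n : ℕ, (List.ofFn fun i : Fin n => x i) ∈ T }

/-- `X` has the Baire property: it differs from an open set by a meager set. -/
def HasBaireProp (X : Set (ℕ → Bool)) : Prop :=
  ∃ U : Set (ℕ → Bool), IsOpen U ∧ IsMeagre (symmDiff X U)

/-- `X ⊆ 2^ω` is Silver measurable: inside every Silver tree there is a Silver
subtree whose body is contained in `X` or disjoint from `X`. -/
def SilverMeasurable (X : Set (ℕ → Bool)) : Prop :=
  ∀ T : Set (List Bool), IsSilver T →
    ∃ T' : Set (List Bool), IsSilver T' ∧ T' ⊆ T ∧ (body T' ⊆ X ∨ body T' ∩ X = ∅)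

/-- A family of subsets of Cantor space is topologically reasonable if it is closed
under continuous preimages and under intersections with closed sets. -/
def TopReasonable (Θ : Set (Set (ℕ → Bool))) : Prop :=
  (∀ X ∈ Θ, ∀ f : (ℕ → Bool) → (ℕ → Bool), Continuous f → f ⁻¹' X ∈ Θ) ∧
  (∀ X ∈ Θ, ∀ C : Set (ℕ → Bool), IsClosed C → X ∩ C ∈ Θ)


open Set Classical

noncomputable section SilverAux

/-- Cylinder determined by a finite string. -/
def Cyl (s : List Bool) : Set (ℕ → Bool) :=
  { x | ∀ k, (h : k < s.length) → x k = s[k] }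

/-- The uniform tree determined by a level function. -/
def tree (S : ℕ → Set Bool) : Set (List Bool) :=
  { t | ∀ k, (h : k < t.length) → t[k] ∈ S k }

lemma mem_tree_append {S : ℕ → Set Bool} {t : List Bool} {i : Bool} :
    t ++ [i] ∈ tree S ↔ t ∈ tree S ∧ i ∈ S t.length := by
  constructor
  · intro h
    refine ⟨fun k hk => ?_, ?_⟩
    · have h2 : k < (t ++ [i]).length := by simp; omega
      have := h k h2
      rwa [List.getElem_append_left hk] at this
    · have h2 : t.length < (t ++ [i]).length := by simp
      have := h t.length h2
      rw [List.getElem_append_right (le_refl _)] at this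
      simpa using this
  · rintro ⟨h1, h2⟩ k hk
    simp only [List.length_append, List.length_singleton] at hk
    rcases lt_or_ge k t.length with hk' | hk'
    · rw [List.getElem_append_left hk']; exact h1 k hk'
    · have : k = t.length := by omega
      subst this
      rw [List.getElem_append_right (le_refl _)]
      simpa using h2

lemma tree_isTree (S : ℕ → Set Bool) : IsTree (tree S) := by
  intro t ht k j hj
  rw [List.getElem_take]
  exact ht j (lt_of_lt_of_le hj (by simpa using List.length_take_le k t))

/-- A canonical element of a nonempty set of booleans. -/
def pick (S : ℕ → Set Bool) (k : ℕ) : Bool :=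
  if true ∈ S k then true else false

lemma pick_mem {S : ℕ → Set Bool} {k : ℕ} (h : (S k).Nonempty) : pick S k ∈ S k := by
  unfold pick
  split
  · assumption
  · rcases h with ⟨b, hb⟩
    cases b
    · exact hb
    · tauto

lemma bool_eq_of_ne_univ {S : Set Bool} (h : S ≠ univ) {a b : Bool}
    (ha : a ∈ S) (hb : b ∈ S) : a = b := by
  by_contra hne
  apply h
  ext c
  simp only [mem_univ, iff_true]
  cases a <;> cases b <;> cases c <;> simp_all

lemma exists_extend {S : ℕ → Set Bool} (hne : ∀ k, (S k).Nonempty)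
    {t : List Bool} (ht : t ∈ tree S) (n : ℕ) :
    ∃ u ∈ tree S, t <+: u ∧ u.length = t.length + n := by
  induction n with
  | zero => exact ⟨t, ht, List.prefix_refl t, rfl⟩
  | succ m ih =>
    rcases ih with ⟨u, hu, htu, hlen⟩
    refine ⟨u ++ [pick S u.length], ?_, htu.trans (List.prefix_append _ _), by simp [hlen]; omega⟩
    exact mem_tree_append.mpr ⟨hu, pick_mem (hne _)⟩

lemma tree_silver {S : ℕ → Set Bool} (hne : ∀ k, (S k).Nonempty)
    (hinf : ∀ N, ∃ k, N ≤ k ∧ S k = univ) : IsSilver (tree S) := by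
  refine ⟨⟨tree_isTree S, ⟨[], by intro k hk; simp at hk⟩, ?_⟩, ?_⟩
  · intro t ht
    rcases hinf t.length with ⟨k, hk, hSk⟩
    rcases exists_extend hne ht (k - t.length) with ⟨u, hu, htu, hlen⟩
    have hul : u.length = k := by omega
    refine ⟨u, htu, hu, ?_, ?_⟩ <;>
      exact mem_tree_append.mpr ⟨hu, by rw [hul, hSk]; trivial⟩
  · intro s hs t ht hlen i
    rw [mem_tree_append, mem_tree_append, hlen]
    tauto

lemma mem_body_tree {S : ℕ → Set Bool} {x : ℕ → Bool} :
    x ∈ body (tree S) ↔ ∀ k, x k ∈ S k := by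
  constructor
  · intro h k
    have hlt : k < (List.ofFn fun i : Fin (k + 1) => x ↑i).length := by simp
    have := h (k + 1) k hlt
    rwa [List.getElem_ofFn] at this
  · intro h n k hk
    rw [List.getElem_ofFn]
    exact h k

lemma tree_mono {S S' : ℕ → Set Bool} (h : ∀ k, S' k ⊆ S k) : tree S' ⊆ tree S :=
  fun t ht k hk => h k (ht k hk)

end SilverAux
section Extract

variable {T : Set (List Bool)}

lemma nil_mem (hT : IsSilver T) : [] ∈ T := by
  rcases hT.1.2.1 with ⟨t, ht⟩
  have := hT.1.1 t ht 0
  simpa using this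

lemma exists_len (hT : IsSilver T) : ∀ n, ∃ t ∈ T, t.length = n := by
  intro n
  induction n with
  | zero => exact ⟨[], nil_mem hT, rfl⟩
  | succ m ih =>
    rcases ih with ⟨t, ht, hlen⟩
    rcases hT.1.2.2 t ht with ⟨s, hts, hs, hs0, hs1⟩
    have hsl : m ≤ s.length := hlen ▸ hts.length_le
    refine ⟨(s ++ [true]).take (m + 1), hT.1.1 _ hs1 _, ?_⟩
    simp; omega

/-- The level sets of a tree. -/
def levels (T : Set (List Bool)) : ℕ → Set Bool :=
  fun k => { i | ∃ t ∈ T, t.length = k ∧ t ++ [i] ∈ T }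

lemma take_mem_levels (hT : IsSilver T) {t : List Bool} (ht : t ∈ T) {k : ℕ}
    (hk : k < t.length) : t[k] ∈ levels T k := by
  refine ⟨t.take k, hT.1.1 t ht k, by simp [Nat.le_of_lt hk], ?_⟩
  have : t.take k ++ [t[k]] = t.take (k + 1) := by
    rw [List.take_succ]
    congr 1
    simp [List.getElem?_eq_getElem hk]
  rw [this]
  exact hT.1.1 t ht (k + 1)

lemma eq_tree_levels (hT : IsSilver T) : T = tree (levels T) := by
  ext t
  constructor
  · intro ht k hk
    exact take_mem_levels hT ht hk
  · intro ht
    induction t using List.reverseRecOn with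
    | nil => exact nil_mem hT
    | append_singleton u i ih =>
      have hu : u ∈ tree (levels T) := by
        intro k hk
        have hk' : k < (u ++ [i]).length := by simp; omega
        have := ht k hk'
        rwa [List.getElem_append_left hk] at this
      have hi : i ∈ levels T u.length := by
        have hk' : u.length < (u ++ [i]).length := by simp
        have := ht u.length hk'
        rw [List.getElem_append_right (le_refl _)] at this
        simpa using this
      rcases hi with ⟨w, hw, hwl, hwi⟩
      have huT := ih hu
      exact (hT.2 w hw u huT hwl i).mp hwi

lemma levels_nonempty (hT : IsSilver T) (k : ℕ) : (levels T k).Nonempty := by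
  rcases exists_len hT (k + 1) with ⟨t, ht, hlen⟩
  exact ⟨t[k]'(by omega), take_mem_levels hT ht (by omega)⟩

lemma levels_univ (hT : IsSilver T) : ∀ N, ∃ k, N ≤ k ∧ levels T k = Set.univ := by
  intro N
  rcases exists_len hT N with ⟨t, ht, hlen⟩
  rcases hT.1.2.2 t ht with ⟨s, hts, hs, hs0, hs1⟩
  refine ⟨s.length, hlen ▸ hts.length_le, ?_⟩
  ext i
  simp only [Set.mem_univ, iff_true]
  cases i
  · exact ⟨s, hs, rfl, hs0⟩
  · exact ⟨s, hs, rfl, hs1⟩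

end Extract
section Topology

lemma isOpen_cyl (s : List Bool) : IsOpen (Cyl s) := by
  have : Cyl s = ⋂ (k : Fin s.length), (fun x : ℕ → Bool => x k) ⁻¹' {s[(k : ℕ)]} := by
    ext x
    simp only [Set.mem_iInter, Set.mem_preimage, Set.mem_singleton_iff]
    exact ⟨fun h k => h k k.2, fun h k hk => h ⟨k, hk⟩⟩
  rw [this]
  exact isOpen_iInter_of_finite fun k =>
    (continuous_apply (k : ℕ)).isOpen_preimage _ (isOpen_discrete _)

lemma cyl_nonempty (s : List Bool) : (Cyl s).Nonempty := by
  refine ⟨fun k => if h : k < s.length then s[k] else false, fun k hk => ?_⟩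
  simp [hk]

lemma cyl_anti {s s' : List Bool} (h : s <+: s') : Cyl s' ⊆ Cyl s := by
  intro x hx k hk
  rw [hx k (lt_of_lt_of_le hk h.length_le)]
  exact (h.getElem hk).symm

lemma mem_cyl_self (x : ℕ → Bool) (n : ℕ) :
    x ∈ Cyl (List.ofFn fun i : Fin n => x i) := by
  intro k hk
  rw [List.getElem_ofFn]

/-- Basic fact: open sets in Cantor space contain finite-agreement balls. -/
lemma exists_agree {U : Set (ℕ → Bool)} (hU : IsOpen U) {x : ℕ → Bool} (hx : x ∈ U) :
    ∃ n, ∀ y : ℕ → Bool, (∀ k < n, y k = x k) → y ∈ U := by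
  rcases isOpen_pi_iff.mp hU x hx with ⟨I, u, hI, hsub⟩
  refine ⟨I.sup id + 1, fun y hy => hsub fun a ha => ?_⟩
  have : a < I.sup id + 1 := Nat.lt_succ_of_le (Finset.le_sup (f := id) ha)
  rw [hy a this]
  exact (hI a ha).2

lemma cyl_subset_of_agree {U : Set (ℕ → Bool)} {z : ℕ → Bool} {n : ℕ}
    (hball : ∀ y : ℕ → Bool, (∀ k < n, y k = z k) → y ∈ U) :
    Cyl (List.ofFn fun i : Fin n => z i) ⊆ U := by
  intro y hy
  refine hball y fun k hk => ?_
  have := hy k (by simpa using hk)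
  rwa [List.getElem_ofFn] at this

/-- Baire property dichotomy: meager, or comeager inside some cylinder. -/
lemma bp_dichotomy {Y : Set (ℕ → Bool)} (h : HasBaireProp Y) :
    IsMeagre Y ∨ ∃ s : List Bool, IsMeagre (Cyl s \ Y) := by
  rcases h with ⟨U, hU, hm⟩
  rcases Set.eq_empty_or_nonempty U with hUe | ⟨z, hz⟩
  · left
    have : Y ⊆ symmDiff Y U := by
      intro y hy
      rw [Set.mem_symmDiff]
      left
      exact ⟨hy, hUe ▸ (Set.notMem_empty y)⟩
    exact hm.mono this
  · right
    rcases exists_agree hU hz with ⟨n, hball⟩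
    refine ⟨List.ofFn fun i : Fin n => z i, hm.mono ?_⟩
    intro y hy
    rw [Set.mem_symmDiff]
    right
    exact ⟨cyl_subset_of_agree hball hy.1, hy.2⟩

/-- All binary strings of a given length. -/
def allStrings : ℕ → List (List Bool)
  | 0 => [[]]
  | n + 1 => (allStrings n).map (false :: ·) ++ (allStrings n).map (true :: ·)

lemma mem_allStrings : ∀ (n : ℕ) (t : List Bool), t.length = n → t ∈ allStrings n := by
  intro n
  induction n with
  | zero => intro t ht; simp [allStrings, List.length_eq_zero_iff.mp ht]
  | succ m ih =>
    intro t ht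
    rcases t with _ | ⟨b, t'⟩
    · simp at ht
    · have ht' : t'.length = m := by simpa using ht
      cases b
      · exact List.mem_append_left _ (List.mem_map.mpr ⟨t', ih t' ht', rfl⟩)
      · exact List.mem_append_right _ (List.mem_map.mpr ⟨t', ih t' ht', rfl⟩)

/-- One fusion step: a common extension forcing a dense open set, uniformly
over all stems in a list. -/
lemma cyl_agree_extend {u : List Bool} {z : ℕ → Bool} (hz : z ∈ Cyl u) (n : ℕ) :
    ∃ b : List Bool, n ≤ (u ++ b).length ∧
      ∀ k, (h : k < (u ++ b).length) → (u ++ b)[k] = z k := by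
  refine ⟨List.ofFn (fun i : Fin (max n u.length - u.length) => z (u.length + i)), ?_, ?_⟩
  · simp only [List.length_append, List.length_ofFn]
    omega
  · intro k hk
    rcases lt_or_ge k u.length with hk' | hk'
    · rw [List.getElem_append_left hk']
      exact (hz k hk').symm
    · rw [List.getElem_append_right hk', List.getElem_ofFn]
      congr 1
      show u.length + (k - u.length) = k
      omega

lemma force_list {D : Set (ℕ → Bool)} (hDo : IsOpen D) (hDd : Dense D)
    (L : List (List Bool)) : ∃ e : List Bool, ∀ t ∈ L, Cyl (t ++ e) ⊆ D := by
  induction L with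
  | nil => exact ⟨[], by simp⟩
  | cons t L ih =>
    rcases ih with ⟨e, he⟩
    have hne : (Cyl (t ++ e) ∩ D).Nonempty :=
      dense_iff_inter_open.mp hDd _ (isOpen_cyl _) (cyl_nonempty _)
    rcases hne with ⟨z, hzC, hzD⟩
    rcases exists_agree hDo hzD with ⟨n, hball⟩
    rcases cyl_agree_extend hzC n with ⟨b, hblen, hb⟩
    refine ⟨e ++ b, fun t' ht' => ?_⟩
    rcases List.mem_cons.mp ht' with rfl | ht'
    · intro y hy
      rw [← List.append_assoc] at hy
      refine hball y fun k hk => ?_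
      rw [hy k (lt_of_lt_of_le hk hblen)]
      exact hb k _
    · exact fun y hy => he t' ht' (cyl_anti ⟨b, by simp⟩ hy)

/-- Forcing uniformly over all stems of a fixed length. -/
lemma force_all {D : Set (ℕ → Bool)} (hDo : IsOpen D) (hDd : Dense D) (m : ℕ) :
    ∃ e : List Bool, ∀ t : List Bool, t.length = m → Cyl (t ++ e) ⊆ D := by
  rcases force_list hDo hDd (allStrings m) with ⟨e, he⟩
  exact ⟨e, fun t ht => he t (mem_allStrings m t ht)⟩

end Topology
section Fusion

lemma meager_seq {Z : Set (ℕ → Bool)} (hZ : IsMeagre Z) :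
    ∃ D : ℕ → Set (ℕ → Bool), (∀ n, IsOpen (D n)) ∧ (∀ n, Dense (D n)) ∧
      (⋂ n, D n) ⊆ Zᶜ := by
  have hres : Zᶜ ∈ residual (ℕ → Bool) := hZ
  rcases mem_residual.mp hres with ⟨t, hts, ⟨Ts, hTo, hTc, rfl⟩, hdense⟩
  have hcount : (insert Set.univ Ts).Countable := hTc.insert _
  rcases hcount.exists_eq_range ⟨Set.univ, Set.mem_insert _ _⟩ with ⟨f, hf⟩
  refine ⟨f, ?_, ?_, ?_⟩
  · intro n
    have : f n ∈ insert Set.univ Ts := hf ▸ Set.mem_range_self n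
    rcases this with h | h
    · rw [h]; exact isOpen_univ
    · exact hTo _ h
  · intro n
    have : f n ∈ insert Set.univ Ts := hf ▸ Set.mem_range_self n
    rcases this with h | h
    · rw [h]; exact dense_univ
    · exact hdense.mono (Set.sInter_subset_of_mem h)
  · intro x hx
    apply hts
    intro u hu
    have : u ∈ insert Set.univ Ts := Set.mem_insert_of_mem _ hu
    rw [hf] at this
    rcases this with ⟨n, rfl⟩
    exact Set.mem_iInter.mp hx n

/-- Level set coded by an optional bit. -/
def levelOf (o : Option Bool) : Set Bool := o.elim Set.univ (fun b => {b})

lemma levelOf_nonempty (o : Option Bool) : (levelOf o).Nonempty := by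
  cases o <;> simp [levelOf]

lemma getElem_idx {α : Type*} (l : List α) {i j : ℕ} (h : i = j) {hi : i < l.length} :
    l[i] = l[j]'(h ▸ hi) := by subst h; rfl

/-- Fusion: the complement of a meager set contains the branches of a uniform
scheme below any given stem. -/
lemma fusion {Z : Set (ℕ → Bool)} (hZ : IsMeagre Z) (s : List Bool) :
    ∃ S : ℕ → Set Bool, (∀ k, (S k).Nonempty) ∧ (∀ N, ∃ k, N ≤ k ∧ S k = Set.univ) ∧
      {x : ℕ → Bool | ∀ k, x k ∈ S k} ⊆ Cyl s ∧
      {x : ℕ → Bool | ∀ k, x k ∈ S k} ∩ Z = ∅ := by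
  obtain ⟨D, hDo, hDd, hDi⟩ := meager_seq hZ
  have key : ∀ j m : ℕ, ∃ e : List Bool, ∀ t : List Bool, t.length = m →
      Cyl (t ++ e) ⊆ D j := fun j m => force_all (hDo j) (hDd j) m
  choose E hE using key
  set F : ℕ → List (Option Bool) := fun n =>
    Nat.rec (s.map some) (fun j σ => (σ ++ [none]) ++ (E j (σ.length + 1)).map some) n
    with hF
  have hF0 : F 0 = s.map some := rfl
  have hFs : ∀ j, F (j + 1) = (F j ++ [none]) ++ (E j ((F j).length + 1)).map some :=
    fun j => rfl
  have hlen : ∀ j, (F j).length + 1 + (E j ((F j).length + 1)).length = (F (j + 1)).length := by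
    intro j; rw [hFs j]; simp; omega
  have hlen1 : ∀ j, (F j).length + 1 ≤ (F (j + 1)).length := by
    intro j; rw [← hlen j]; omega
  have hpre : ∀ j, F j <+: F (j + 1) := by
    intro j
    refine ⟨[none] ++ (E j ((F j).length + 1)).map some, ?_⟩
    rw [hFs j, List.append_assoc]
  have hpre' : ∀ j i, j ≤ i → F j <+: F i := by
    intro j i hji
    induction i, hji using Nat.le_induction with
    | base => exact List.prefix_refl _
    | succ n hn ih => exact ih.trans (hpre n)
  have hlen' : ∀ j, j ≤ (F j).length := by
    intro j
    induction j with
    | zero => exact Nat.zero_le _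
    | succ n ih => exact le_trans (by omega : n + 1 ≤ (F n).length + 1) (hlen1 n)
  set G : ℕ → Option Bool := fun k => (F (k + 1)).getD k none with hG
  have hkF : ∀ k, k < (F (k + 1)).length := fun k => lt_of_lt_of_le (Nat.lt_succ_self k)
    (le_trans (by have := hlen' k; omega : k + 1 ≤ (F k).length + 1) (hlen1 k))
  have stab : ∀ j k, (h : k < (F j).length) → (F j)[k] = G k := by
    intro j k h
    have hGk : G k = (F (k + 1))[k]'(hkF k) := List.getD_eq_getElem _ _ (hkF k)
    rw [hGk]
    rcases le_total j (k + 1) with h1 | h1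
    · exact (hpre' j (k + 1) h1).getElem h
    · exact ((hpre' (k + 1) j h1).getElem (hkF k)).symm
  refine ⟨fun k => levelOf (G k), fun k => levelOf_nonempty _, ?_, ?_, ?_⟩
  · -- infinitely many free levels
    intro N
    refine ⟨(F N).length, hlen' N, ?_⟩
    have hk : (F N).length < (F (N + 1)).length := hlen1 N
    have : (F (N + 1))[(F N).length]'hk = none := by
      rw [List.getElem_of_eq (hFs N) hk]
      rw [List.getElem_append_left (by simp : (F N).length < (F N ++ [none]).length)]
      rw [List.getElem_append_right (le_refl _)]
      simp
    rw [stab (N + 1) _ hk] at this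
    show levelOf (G (F N).length) = Set.univ
    rw [this]
    rfl
  · -- contained in the stem cylinder
    intro x hx k hk
    have hk0 : k < (F 0).length := by rw [hF0]; simpa using hk
    have : (F 0)[k] = G k := stab 0 k hk0
    rw [List.getElem_of_eq hF0 hk0, List.getElem_map] at this
    have hxk : x k ∈ levelOf (G k) := hx k
    rw [← this] at hxk
    simpa [levelOf] using hxk
  · -- disjoint from Z
    rw [Set.eq_empty_iff_forall_notMem]
    rintro x ⟨hx, hxZ⟩
    apply hDi _ hxZ
    rw [Set.mem_iInter]
    intro j
    obtain ⟨t, ht, htl⟩ : ∃ t : List Bool,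
        (∀ i, (hi : i < t.length) → t[i] = x i) ∧ t.length = (F j).length + 1 :=
      ⟨List.ofFn (fun i : Fin ((F j).length + 1) => x i),
        fun i hi => by rw [List.getElem_ofFn], by simp⟩
    refine hE j ((F j).length + 1) t htl ?_
    intro k hk
    have hkl : k < t.length + (E j ((F j).length + 1)).length := by simpa using hk
    rcases lt_or_ge k t.length with hk' | hk'
    · rw [List.getElem_append_left hk']
      exact (ht k hk').symm
    · rw [List.getElem_append_right hk']
      have hklen : k < (F (j + 1)).length := by
        rw [← hlen j]; omega
      have hstab := stab (j + 1) k hklen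
      have heq : (F (j + 1))[k]'hklen =
          some ((E j ((F j).length + 1))[k - t.length]'(by omega)) := by
        rw [List.getElem_of_eq (hFs j) hklen]
        have hm' : (F j ++ [none]).length ≤ k := by simp; omega
        rw [List.getElem_append_right hm', List.getElem_map]
        congr 1
        exact getElem_idx _ (by simp [htl])
      rw [heq] at hstab
      have hxk : x k ∈ levelOf (G k) := hx k
      rw [← hstab] at hxk
      simpa [levelOf] using hxk

end Fusion

/-- If every set in a topologically reasonable family `Θ` has the Baire property,
then every set in `Θ` is Silver measurable. -/
theorem baireProp_implies_silverMeasurable (Θ : Set (Set (ℕ → Bool)))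
    (hΘ : TopReasonable Θ) (hBP : ∀ X ∈ Θ, HasBaireProp X) :
    ∀ X ∈ Θ, SilverMeasurable X := by
  classical
  intro X hX T hT
  have hSne := levels_nonempty hT
  have hSuniv := levels_univ hT
  have hTeq := eq_tree_levels hT
  set S : ℕ → Set Bool := levels T with hSdef
  set p : ℕ → Prop := fun k => S k = Set.univ with hp
  have hpInf : (setOf p).Infinite := by
    apply Set.infinite_of_not_bddAbove
    rintro ⟨b, hb⟩
    rcases hSuniv (b + 1) with ⟨k, hk, hku⟩
    have : k ≤ b := hb (show k ∈ setOf p from hku)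
    omega
  set ψ : (ℕ → Bool) → (ℕ → Bool) :=
    fun x k => if S k = Set.univ then x (Nat.count p k) else pick S k with hψ
  have hcont : Continuous ψ := by
    apply continuous_pi
    intro k
    by_cases h : S k = Set.univ
    · have : (fun x : ℕ → Bool => ψ x k) = fun x => x (Nat.count p k) := by
        funext x; show (if S k = Set.univ then x (Nat.count p k) else pick S k) = _
        rw [if_pos h]
      rw [this]; exact continuous_apply _
    · have : (fun x : ℕ → Bool => ψ x k) = fun _ => pick S k := by
        funext x; show (if S k = Set.univ then x (Nat.count p k) else pick S k) = _
        rw [if_neg h]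
      rw [this]; exact continuous_const
  set Y : Set (ℕ → Bool) := ψ ⁻¹' X with hY
  have hYΘ : Y ∈ Θ := hΘ.1 X hX ψ hcont
  have hmain : ∃ S2 : ℕ → Set Bool, (∀ k, (S2 k).Nonempty) ∧
      (∀ N, ∃ k, N ≤ k ∧ S2 k = Set.univ) ∧
      ({x : ℕ → Bool | ∀ k, x k ∈ S2 k} ⊆ Y ∨
        {x : ℕ → Bool | ∀ k, x k ∈ S2 k} ∩ Y = ∅) := by
    rcases bp_dichotomy (hBP Y hYΘ) with hmeager | ⟨σ, hσ⟩
    · rcases fusion hmeager [] with ⟨S2, h1, h2, _, h4⟩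
      exact ⟨S2, h1, h2, Or.inr h4⟩
    · rcases fusion hσ σ with ⟨S2, h1, h2, h3, h4⟩
      refine ⟨S2, h1, h2, Or.inl fun x hx => ?_⟩
      by_contra hxY
      rw [Set.eq_empty_iff_forall_notMem] at h4
      exact h4 x ⟨hx, h3 hx, hxY⟩
  rcases hmain with ⟨S2, h2ne, h2univ, hside⟩
  set S' : ℕ → Set Bool :=
    fun k => if S k = Set.univ then S2 (Nat.count p k) else S k with hS'
  have hS'ne : ∀ k, (S' k).Nonempty := by
    intro k
    show (if S k = Set.univ then S2 (Nat.count p k) else S k).Nonempty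
    split
    · exact h2ne _
    · exact hSne k
  have hS'univ : ∀ N, ∃ k, N ≤ k ∧ S' k = Set.univ := by
    intro N
    rcases h2univ N with ⟨j, hjN, hj⟩
    have hpk : p (Nat.nth p j) := Nat.nth_mem_of_infinite hpInf j
    refine ⟨Nat.nth p j, ?_, ?_⟩
    · exact le_trans hjN (Nat.le_nth fun hf => (hpInf hf).elim)
    · show (if S (Nat.nth p j) = Set.univ then S2 (Nat.count p (Nat.nth p j))
        else S (Nat.nth p j)) = Set.univ
      rw [if_pos (show S (Nat.nth p j) = Set.univ from hpk),
        Nat.count_nth_of_infinite hpInf, hj]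
  have hS'sub : ∀ k, S' k ⊆ S k := by
    intro k
    show (if S k = Set.univ then S2 (Nat.count p k) else S k) ⊆ S k
    split
    · rename_i h; rw [h]; exact Set.subset_univ _
    · exact subset_rfl
  have hbody : ∀ x ∈ body (tree S'),
      (fun j => x (Nat.nth p j)) ∈ {z : ℕ → Bool | ∀ k, z k ∈ S2 k} ∧
        ψ (fun j => x (Nat.nth p j)) = x := by
    intro x hx
    rw [mem_body_tree] at hx
    constructor
    · intro j
      have hpk : p (Nat.nth p j) := Nat.nth_mem_of_infinite hpInf j
      have hxk : x (Nat.nth p j) ∈ (if S (Nat.nth p j) = Set.univ then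
          S2 (Nat.count p (Nat.nth p j)) else S (Nat.nth p j)) := hx (Nat.nth p j)
      rwa [if_pos (show S (Nat.nth p j) = Set.univ from hpk),
        Nat.count_nth_of_infinite hpInf] at hxk
    · funext k
      show (if S k = Set.univ then x (Nat.nth p (Nat.count p k)) else pick S k) = x k
      by_cases h : S k = Set.univ
      · rw [if_pos h, Nat.nth_count (show p k from h)]
      · rw [if_neg h]
        have hxk : x k ∈ (if S k = Set.univ then S2 (Nat.count p k) else S k) := hx k
        rw [if_neg h] at hxk
        exact bool_eq_of_ne_univ h (pick_mem (hSne k)) hxk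
  refine ⟨tree S', tree_silver hS'ne hS'univ, hTeq ▸ tree_mono hS'sub, ?_⟩
  rcases hside with hsub | hdis
  · left
    intro x hx
    obtain ⟨hz, hψz⟩ := hbody x hx
    have hmem : (fun j => x (Nat.nth p j)) ∈ Y := hsub hz
    rw [hY, Set.mem_preimage, hψz] at hmem
    exact hmem
  · right
    rw [Set.eq_empty_iff_forall_notMem]
    rintro x ⟨hx, hxX⟩
    obtain ⟨hz, hψz⟩ := hbody x hx
    have hmem : (fun j => x (Nat.nth p j)) ∈ Y := by
      rw [hY, Set.mem_preimage, hψz]; exact hxX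
    rw [Set.eq_empty_iff_forall_notMem] at hdis
    exact hdis _ ⟨hz, hmem⟩
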